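/- arXiv:1201.2906 — 2 statements merged into one kernel-verified Lean document; each statement's English description precedes it below -/
import Mathlib

section
/- If two channel Holevo informations satisfy I_P + I_E ≤ 1, and each satisfies I ≥ log₂(2/(1+√F)) with F ∈ [0,1], then 2√F_P + √F_E ≥ 1. -/
theorem stmt_1 (IP IE FP FE : ℝ)
    (hFP0 : 0 ≤ FP) (hFP1 : FP ≤ 1) (hFE0 : 0 ≤ FE) (hFE1 : FE ≤ 1)
    (hsum : IP + IE ≤ 1)
    (hIP : IP ≥ Real.logb 2 (2 / (1 + Real.sqrt FP)))
    (hIE : IE ≥ Real.logb 2 (2 / (1 + Real.sqrt FE))) :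
    2 * Real.sqrt FP + Real.sqrt FE ≥ 1 := by
  set a := Real.sqrt FP with ha
  set b := Real.sqrt FE with hb
  have ha0 : 0 ≤ a := Real.sqrt_nonneg _
  have hb0 : 0 ≤ b := Real.sqrt_nonneg _
  have ha1 : a ≤ 1 := by
    rw [ha]; nlinarith [Real.sq_sqrt hFP0, Real.sqrt_nonneg FP]
  have hpa : (0:ℝ) < 1 + a := by linarith
  have hpb : (0:ℝ) < 1 + b := by linarith
  have hx : (0:ℝ) < 2 / (1 + a) := by positivity
  have hy : (0:ℝ) < 2 / (1 + b) := by positivity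
  have hlog : Real.logb 2 (2 / (1 + a) * (2 / (1 + b))) ≤ 1 := by
    rw [Real.logb_mul (ne_of_gt hx) (ne_of_gt hy)]
    linarith
  have h2 : 2 / (1 + a) * (2 / (1 + b)) ≤ 2 := by
    have := (Real.logb_le_iff_le_rpow (by norm_num) (by positivity)).mp hlog
    simpa using this
  have hprod : 2 ≤ (1 + a) * (1 + b) := by
    have h := mul_le_mul_of_nonneg_left h2 (le_of_lt (mul_pos hpa hpb))
    rw [div_mul_div_comm] at h2
    have := (div_le_iff₀ (mul_pos hpa hpb)).mp h2
    nlinarith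
  nlinarith
end

section
/- Symmetrically, under the same hypotheses, √F_P + 2√F_E ≥ 1. -/
theorem stmt_2 (IP IE FP FE : ℝ)
    (hFP0 : 0 ≤ FP) (hFP1 : FP ≤ 1) (hFE0 : 0 ≤ FE) (hFE1 : FE ≤ 1)
    (hsum : IP + IE ≤ 1)
    (hIP : IP ≥ Real.logb 2 (2 / (1 + Real.sqrt FP)))
    (hIE : IE ≥ Real.logb 2 (2 / (1 + Real.sqrt FE))) :
    Real.sqrt FP + 2 * Real.sqrt FE ≥ 1 := by
  set a := Real.sqrt FP with ha
  set b := Real.sqrt FE with hb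
  have ha0 : 0 ≤ a := Real.sqrt_nonneg _
  have hb0 : 0 ≤ b := Real.sqrt_nonneg _
  have ha1 : a ≤ 1 := by
    rw [ha, show (1:ℝ) = Real.sqrt 1 by simp]
    exact Real.sqrt_le_sqrt hFP1
  have hpa : (0:ℝ) < 1 + a := by linarith
  have hpb : (0:ℝ) < 1 + b := by linarith
  have hlog : Real.logb 2 (2 / (1 + a)) + Real.logb 2 (2 / (1 + b)) ≤ 1 := by
    linarith
  have hmul : Real.logb 2 ((2 / (1 + a)) * (2 / (1 + b))) ≤ 1 := by
    rwa [Real.logb_mul (by positivity) (by positivity)]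
  have h2 : (2 / (1 + a)) * (2 / (1 + b)) ≤ 2 := by
    have h1 : Real.logb 2 ((2 / (1 + a)) * (2 / (1 + b))) ≤ Real.logb 2 2 := by
      simpa using hmul
    exact (Real.logb_le_logb (by norm_num) (by positivity) (by norm_num)).mp h1
  have hprod : 2 ≤ (1 + a) * (1 + b) := by
    have h4 : 4 / ((1 + a) * (1 + b)) ≤ 2 := by
      have : (2 / (1 + a)) * (2 / (1 + b)) = 4 / ((1 + a) * (1 + b)) := by
        field_simp; ring
      linarith [this ▸ h2]
    rw [div_le_iff₀ (by positivity)] at h4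
    nlinarith
  nlinarith [mul_le_of_le_one_left hb0 ha1]
end
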